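/- Let A : ℝ → Matrix (n×n, ℝ) be continuously differentiable and set d(ν) = det A(ν). Suppose ν₀ ∈ ℝ is such that d(ν₀) = 0, d'(ν₀) = 0, and the kernel of A(ν₀) is one-dimensional. Then for every u₀ spanning ker A(ν₀) there exists u₁ ∈ ℝⁿ with A'(ν₀)u₀ + A(ν₀)u₁ = 0; equivalently, A'(ν₀)u₀ lies in the range (column space) of A(ν₀). -/

import Mathlib

open Matrix

open Finset


lemma hasDerivAt_det_aux {n : ℕ} (M : ℝ → Matrix (Fin n) (Fin n) ℝ)
    (M' : Matrix (Fin n) (Fin n) ℝ) (t₀ : ℝ)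
    (h : ∀ i j, HasDerivAt (fun t => M t i j) (M' i j) t₀) :
    HasDerivAt (fun t => (M t).det)
      (∑ i, ((M t₀).updateCol i (fun r => M' r i)).det) t₀ := by
  have hp : ∀ σ : Equiv.Perm (Fin n),
      HasDerivAt (fun t => ∏ i, M t (σ i) i)
        (∑ i, (∏ j ∈ univ.erase i, M t₀ (σ j) j) * M' (σ i) i) t₀ := by
    intro σ
    have := HasDerivAt.fun_finsetProd (u := univ) (f := fun i t => M t (σ i) i)
      (f' := fun i => M' (σ i) i) (x := t₀) (fun i _ => h (σ i) i)
    simpa [smul_eq_mul] using this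
  have h2 : HasDerivAt (fun t => ∑ σ : Equiv.Perm (Fin n),
      ((Equiv.Perm.sign σ : ℤ) : ℝ) * ∏ i, M t (σ i) i)
      (∑ σ : Equiv.Perm (Fin n), ((Equiv.Perm.sign σ : ℤ) : ℝ) *
        ∑ i, (∏ j ∈ univ.erase i, M t₀ (σ j) j) * M' (σ i) i) t₀ :=
    HasDerivAt.fun_sum (fun σ _ => (hp σ).const_mul _)
  have hfun : (fun t => (M t).det) = fun t => ∑ σ : Equiv.Perm (Fin n),
      ((Equiv.Perm.sign σ : ℤ) : ℝ) * ∏ i, M t (σ i) i := by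
    funext t; exact Matrix.det_apply' _
  rw [hfun]
  convert h2 using 1
  simp_rw [Finset.mul_sum]
  rw [Finset.sum_comm]
  refine Finset.sum_congr rfl fun i _ => ?_
  rw [Matrix.det_apply']
  refine Finset.sum_congr rfl fun σ _ => ?_
  congr 1
  rw [← Finset.mul_prod_erase _ _ (Finset.mem_univ i), mul_comm]
  congr 1
  · exact Finset.prod_congr rfl fun j hj => by
      rw [Matrix.updateCol_apply, if_neg (Finset.ne_of_mem_erase hj)]
  · simp [Matrix.updateCol_apply]

lemma sum_det_updateColumn {n : ℕ} (B D : Matrix (Fin n) (Fin n) ℝ) :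
    ∑ i, (B.updateCol i (fun r => D r i)).det
      = ∑ i, ∑ j, B.adjugate i j * D j i := by
  refine Finset.sum_congr rfl fun i _ => ?_
  rw [← Matrix.cramer_apply, Matrix.cramer_eq_adjugate_mulVec]
  simp [Matrix.mulVec, dotProduct]

lemma isUnit_perturb {n : ℕ} (B : Matrix (Fin n) (Fin n) ℝ) (c u₀ : Fin n → ℝ)
    (hBtc : Bᵀ *ᵥ c = 0) (hcne : c ≠ 0) (hu0ne : u₀ ≠ 0)
    (hker : ∀ x, B *ᵥ x = 0 → ∃ t : ℝ, t • u₀ = x) :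
    IsUnit (B + replicateCol Unit c * replicateRow Unit u₀).det := by
  rw [← Matrix.isUnit_iff_isUnit_det, ← Matrix.mulVec_injective_iff_isUnit]
  have hinj : ∀ x, (B + replicateCol Unit c * replicateRow Unit u₀) *ᵥ x = 0 → x = 0 := by
    intro x hx
    have hcr : (replicateCol Unit c * replicateRow Unit u₀) *ᵥ x = (u₀ ⬝ᵥ x) • c := by
      ext k
      simp [Matrix.mulVec, Matrix.mul_apply, dotProduct, Finset.mul_sum,
        mul_comm, mul_left_comm]
    rw [Matrix.add_mulVec, hcr] at hx
    have hdot : c ⬝ᵥ (B *ᵥ x) + (u₀ ⬝ᵥ x) * (c ⬝ᵥ c) = 0 := by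
      have := congrArg (fun v => c ⬝ᵥ v) hx
      simpa [dotProduct_add, dotProduct_smul, smul_eq_mul, mul_comm] using this
    have hcBx : c ⬝ᵥ (B *ᵥ x) = 0 := by
      rw [Matrix.dotProduct_mulVec, ← Matrix.mulVec_transpose, hBtc, zero_dotProduct]
    have hcc : c ⬝ᵥ c ≠ 0 := fun h => hcne (dotProduct_self_eq_zero.mp h)
    have hux : u₀ ⬝ᵥ x = 0 := by
      rcases mul_eq_zero.mp (by linarith [hdot, hcBx] : (u₀ ⬝ᵥ x) * (c ⬝ᵥ c) = 0) with h | h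
      · exact h
      · exact absurd h hcc
    have hBx : B *ᵥ x = 0 := by
      rw [hux, zero_smul, add_zero] at hx; exact hx
    obtain ⟨t, ht⟩ := hker x hBx
    have : u₀ ⬝ᵥ (t • u₀) = 0 := by rw [ht, hux]
    have ht0 : t = 0 := by
      rcases mul_eq_zero.mp (by simpa [dotProduct_smul, smul_eq_mul, mul_comm] using this :
        t * (u₀ ⬝ᵥ u₀) = 0) with h | h
      · exact h
      · exact absurd h (fun hh => hu0ne (dotProduct_self_eq_zero.mp hh))
    rw [← ht, ht0, zero_smul]
  intro x y hxy
  have : (B + replicateCol Unit c * replicateRow Unit u₀) *ᵥ (x - y) = 0 := by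
    rw [Matrix.mulVec_sub, hxy, sub_self]
  exact sub_eq_zero.mp (hinj _ this)

lemma det_line {n : ℕ} (B : Matrix (Fin n) (Fin n) ℝ) (c u₀ : Fin n → ℝ)
    (hC : IsUnit (B + replicateCol Unit c * replicateRow Unit u₀).det) (hB0 : B.det = 0) :
    ∀ s : ℝ, (B + s • (replicateCol Unit c * replicateRow Unit u₀)).det
      = (B + replicateCol Unit c * replicateRow Unit u₀).det * s := by
  set C₀ := replicateCol Unit c * replicateRow Unit u₀ with hC₀
  set C := B + C₀ with hCdef
  set q := (replicateRow Unit u₀ * C⁻¹ * replicateCol Unit c) default default with hq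
  have key : ∀ s : ℝ, (B + s • C₀).det = C.det * (1 + (s - 1) * q) := by
    intro s
    have h1 : B + s • C₀ = C + replicateCol Unit ((s - 1) • c) * replicateRow Unit u₀ := by
      rw [Matrix.replicateCol_smul, Matrix.smul_mul, ← hC₀, hCdef]
      module
    rw [h1, Matrix.det_add_replicateCol_mul_replicateRow hC,
      Matrix.det_unique (A := 1 + replicateRow Unit u₀ * C⁻¹ * replicateCol Unit ((s - 1) • c))]
    congr 1
    rw [Matrix.replicateCol_smul, Matrix.mul_smul]
    simp [Matrix.add_apply, Matrix.one_apply, hq, smul_eq_mul]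
  have hq1 : q = 1 := by
    have h0 := key 0
    simp only [zero_smul, add_zero] at h0
    rw [hB0] at h0
    have hne : C.det ≠ 0 := hC.ne_zero
    have : 1 + (0 - 1) * q = 0 := by
      rcases mul_eq_zero.mp h0.symm with h | h
      · exact absurd h hne
      · exact h
    linarith
  intro s
  rw [key s, hq1]
  ring

/-- If `d(ν) = det A(ν)` has a double root at `ν₀` (`d(ν₀) = d'(ν₀) = 0`) and the
kernel of `A(ν₀)` is one-dimensional, then every spanning vector `u₀` of the kernel
admits a Jordan chain vector `u₁` with `A'(ν₀)u₀ + A(ν₀)u₁ = 0`; equivalently,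
`A'(ν₀)u₀` lies in the range of `A(ν₀)`. -/
theorem stmt2 (n : ℕ) (A : ℝ → Matrix (Fin n) (Fin n) ℝ)
    (hA : ∀ i j : Fin n, ContDiff ℝ 1 (fun ν : ℝ => A ν i j))
    (d : ℝ → ℝ) (hd : ∀ ν : ℝ, d ν = (A ν).det)
    (ν₀ : ℝ)
    (h0 : d ν₀ = 0) (h1 : deriv d ν₀ = 0)
    (hker : Module.finrank ℝ (LinearMap.ker (A ν₀).mulVecLin) = 1) :
    ∀ u₀ : Fin n → ℝ, LinearMap.ker (A ν₀).mulVecLin = Submodule.span ℝ {u₀} →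
      (∃ u₁ : Fin n → ℝ,
        (Matrix.of fun i j : Fin n => deriv (fun ν : ℝ => A ν i j) ν₀) *ᵥ u₀
          + (A ν₀) *ᵥ u₁ = 0) ∧
      (Matrix.of fun i j : Fin n => deriv (fun ν : ℝ => A ν i j) ν₀) *ᵥ u₀ ∈
        LinearMap.range (A ν₀).mulVecLin := by
  intro u₀ hspan
  set B := A ν₀ with hB
  set B' := (Matrix.of fun i j : Fin n => deriv (fun ν : ℝ => A ν i j) ν₀) with hB'
  -- basic facts
  have hdet0 : B.det = 0 := by rw [← hd ν₀]; exact h0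
  have hadjB : B.adjugate * B = 0 := by rw [Matrix.adjugate_mul, hdet0, zero_smul]
  have hBadj : B * B.adjugate = 0 := by rw [Matrix.mul_adjugate, hdet0, zero_smul]
  have hu0ne : u₀ ≠ 0 := by
    rintro rfl
    rw [Submodule.span_zero_singleton] at hspan
    rw [hspan, finrank_bot] at hker
    exact one_ne_zero hker.symm
  have hkerx : ∀ x, B *ᵥ x = 0 → ∃ t : ℝ, t • u₀ = x := by
    intro x hx
    have hx' : x ∈ LinearMap.ker B.mulVecLin := LinearMap.mem_ker.mpr (by
      simpa [Matrix.mulVecLin_apply] using hx)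
    rw [hspan] at hx'
    exact Submodule.mem_span_singleton.mp hx'
  obtain ⟨j₀, hj₀⟩ := Function.ne_iff.mp hu0ne
  -- Jacobi: derivative of the determinant
  have hder : ∀ i j, HasDerivAt (fun ν => A ν i j) (B' i j) ν₀ := fun i j =>
    (((hA i j).differentiable one_ne_zero) ν₀).hasDerivAt
  have hJ0 : ∑ i, ∑ j, B.adjugate i j * B' j i = 0 := by
    have H := hasDerivAt_det_aux A B' ν₀ hder
    have hdfun : d = fun ν => (A ν).det := funext hd
    have : deriv d ν₀ = ∑ i, (B.updateCol i (fun r => B' r i)).det := by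
      rw [hdfun]; exact H.deriv
    rw [← sum_det_updateColumn, ← this, h1]
  -- columns of the adjugate
  have hcol : ∀ i, ∃ t : ℝ, t • u₀ = fun j => B.adjugate j i := by
    intro i
    apply hkerx
    ext k
    have := congrFun (congrFun hBadj k) i
    simpa [Matrix.mulVec, dotProduct, Matrix.mul_apply] using this
  choose α hα using hcol
  have Pα : ∀ i j, B.adjugate j i = α i * u₀ j := fun i j => by
    have := congrFun (hα i) j
    simpa [Pi.smul_apply, smul_eq_mul, mul_comm] using this.symm
  -- rank facts
  have hfinfun : Module.finrank ℝ (Fin n → ℝ) = n := by simp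
  have hfr : Module.finrank ℝ (LinearMap.range B.mulVecLin) + 1 = n := by
    have h := LinearMap.finrank_range_add_finrank_ker B.mulVecLin
    rw [hker, hfinfun] at h
    exact h
  have hkerT : Module.finrank ℝ (LinearMap.ker Bᵀ.mulVecLin) = 1 := by
    have h2 := LinearMap.finrank_range_add_finrank_ker Bᵀ.mulVecLin
    rw [hfinfun] at h2
    have h3 : Bᵀ.rank = B.rank := Matrix.rank_transpose B
    unfold Matrix.rank at h3
    omega
  -- a nonzero kernel vector of the transpose
  have : Nontrivial (LinearMap.ker Bᵀ.mulVecLin) :=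
    Module.nontrivial_of_finrank_pos (R := ℝ) (by rw [hkerT]; norm_num)
  obtain ⟨⟨c, hcmem⟩, hcne'⟩ := exists_ne (0 : LinearMap.ker Bᵀ.mulVecLin)
  have hcne : c ≠ 0 := by simpa [Submodule.mk_eq_zero] using hcne'
  have hBtc : Bᵀ *ᵥ c = 0 := by
    rw [Matrix.mulVec_transpose]
    simpa [Matrix.mulVecLin_apply] using hcmem
  -- the adjugate is nonzero: derivative along the rank-one perturbation
  have hCunit := isUnit_perturb B c u₀ hBtc hcne hu0ne hkerx
  set C₀ := replicateCol Unit c * replicateRow Unit u₀ with hC₀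
  set C := B + C₀ with hCdef
  have hline := det_line B c u₀ hCunit hdet0
  have hderC : HasDerivAt (fun s : ℝ => (B + s • C₀).det)
      (∑ i, (B.updateCol i (fun r => C₀ r i)).det) 0 := by
    have h := hasDerivAt_det_aux (fun s => B + s • C₀) C₀ 0 (by
      intro i j
      simp only [Matrix.add_apply, Matrix.smul_apply, smul_eq_mul]
      simpa using ((hasDerivAt_id (0 : ℝ)).mul_const (C₀ i j)).const_add (B i j))
    simpa only [zero_smul, add_zero] using h
  have hlineDeriv : HasDerivAt (fun s : ℝ => (B + s • C₀).det) C.det 0 := by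
    have heq : (fun s : ℝ => (B + s • C₀).det) = fun s : ℝ => C.det * s := funext hline
    rw [heq]
    simpa using (hasDerivAt_id (0 : ℝ)).const_mul C.det
  have hJC : ∑ i, (B.updateCol i (fun r => C₀ r i)).det = C.det :=
    hderC.unique hlineDeriv
  have hsum : (∑ i, u₀ i * u₀ i) * (∑ j, α j * c j) = C.det := by
    rw [← hJC, sum_det_updateColumn, Finset.sum_mul_sum]
    refine Finset.sum_congr rfl fun i _ => Finset.sum_congr rfl fun j _ => ?_
    rw [Pα j i]
    have : C₀ j i = c j * u₀ i := by
      simp [hC₀, Matrix.mul_apply]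
    rw [this]
    ring
  have hαne : α ≠ 0 := by
    intro h
    rw [h] at hsum
    simp at hsum
    exact hCunit.ne_zero hsum.symm
  -- α is in the kernel of the transpose
  have hBtα : Bᵀ *ᵥ α = 0 := by
    ext k
    have h := congrFun (congrFun hadjB j₀) k
    have h1' : ∑ i, α i * u₀ j₀ * B i k = 0 := by
      simpa [Matrix.mul_apply, Pα] using h
    have h2 : u₀ j₀ * ∑ i, B i k * α i = 0 := by
      rw [Finset.mul_sum, ← h1']
      exact Finset.sum_congr rfl fun i _ => by ring
    have h3 : ∑ i, B i k * α i = 0 := (mul_eq_zero.mp h2).resolve_left hj₀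
    simpa [Matrix.mulVec, dotProduct, Matrix.transpose_apply] using h3
  -- the Jacobi identity gives orthogonality
  have hα0 : α ⬝ᵥ (B' *ᵥ u₀) = 0 := by
    have key : α ⬝ᵥ (B' *ᵥ u₀) = ∑ i, ∑ j, B.adjugate i j * B' j i := by
      rw [Finset.sum_comm]
      simp only [dotProduct, Matrix.mulVec]
      refine Finset.sum_congr rfl fun j _ => ?_
      rw [Finset.mul_sum]
      refine Finset.sum_congr rfl fun i _ => ?_
      rw [Pα j i]
      ring
    rw [key, hJ0]
  -- the range of B is the orthogonal complement of α
  let φ : (Fin n → ℝ) →ₗ[ℝ] ℝ :=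
    { toFun := fun v => α ⬝ᵥ v
      map_add' := fun x y => by simp [dotProduct_add]
      map_smul' := fun t x => by simp [dotProduct_smul] }
  have hle : LinearMap.range B.mulVecLin ≤ LinearMap.ker φ := by
    rintro v ⟨x, rfl⟩
    refine LinearMap.mem_ker.mpr ?_
    show α ⬝ᵥ (B.mulVecLin x) = 0
    rw [Matrix.mulVecLin_apply, Matrix.dotProduct_mulVec, ← Matrix.mulVec_transpose,
      hBtα, zero_dotProduct]
  have hαα : α ⬝ᵥ α ≠ 0 := fun h => hαne (dotProduct_self_eq_zero.mp h)
  have hφsurj : Function.Surjective φ := by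
    intro r
    refine ⟨(r / (α ⬝ᵥ α)) • α, ?_⟩
    show α ⬝ᵥ ((r / (α ⬝ᵥ α)) • α) = r
    rw [dotProduct_smul, smul_eq_mul]
    field_simp
  have hkφ : Module.finrank ℝ (LinearMap.ker φ) + 1 = n := by
    have h := LinearMap.finrank_range_add_finrank_ker φ
    rw [LinearMap.range_eq_top.mpr hφsurj, finrank_top, hfinfun] at h
    simp [Module.finrank_self] at h
    omega
  have heq : LinearMap.range B.mulVecLin = LinearMap.ker φ :=
    Submodule.eq_of_le_of_finrank_eq hle (by omega)
  have hmem : B' *ᵥ u₀ ∈ LinearMap.range B.mulVecLin := by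
    rw [heq]
    exact LinearMap.mem_ker.mpr hα0
  obtain ⟨x, hx⟩ := hmem
  have hx' : B *ᵥ x = B' *ᵥ u₀ := by simpa [Matrix.mulVecLin_apply] using hx
  refine ⟨⟨-x, ?_⟩, ⟨x, hx⟩⟩
  rw [Matrix.mulVec_neg, hx']
  simp
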